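/- Let g, h, b be nonnegative integers with h ≤ g, let I be a finite set of integers with m ≤ b for every m ∈ I, and let q : I → ℤ. Suppose that the polynomial ∑_{m∈I} q(m)·x^{b−m} ∈ ℤ[x] is divisible by (1+x)^g and that the quotient has nonnegative coefficients. Let d_0, …, d_h be nonnegative integers and define p(m) = ∑_{i=0}^h d_i·binom(b−m, i). Then the polynomial ∑_{m∈I} p(m)·q(m)·x^{b−m} is divisible by (1+x)^{g−h} in ℤ[x], and the resulting quotient has nonnegative coefficients. -/

import Mathlib

open Polynomial Finset

lemma tri_id (g t j : ℕ) (hjt : j ≤ t) :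
    g.choose j * (g - j).choose (t - j) = g.choose t * t.choose j := by
  rcases le_or_gt t g with htg | htg
  · exact (Nat.choose_mul hjt).symm
  · rcases le_or_gt j g with hjg | hjg
    · rw [Nat.choose_eq_zero_of_lt htg,
        Nat.choose_eq_zero_of_lt (show g - j < t - j by omega)]
      ring
    · rw [Nat.choose_eq_zero_of_lt hjg, Nat.choose_eq_zero_of_lt htg]
      ring

lemma nat_id (g i k t : ℕ) :
    ∑ j ∈ range (i + 1), g.choose j * k.choose (i - j) *
        (if j ≤ t then (g - j).choose (t - j) else 0) =
      g.choose t * (t + k).choose i := by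
  rw [Nat.add_choose_eq, Finset.Nat.sum_antidiagonal_eq_sum_range_succ_mk, Finset.mul_sum]
  refine Finset.sum_congr rfl fun j hj => ?_
  rcases le_or_gt j t with hjt | hjt
  · rw [if_pos hjt, mul_right_comm, tri_id g t j hjt]; ring
  · rw [if_neg (by omega), Nat.choose_eq_zero_of_lt hjt]; ring

lemma core (g i k : ℕ) (hig : i ≤ g) :
    ∃ R : Polynomial ℤ, (∀ n : ℕ, 0 ≤ R.coeff n) ∧
      ∀ n : ℕ, (n.choose i : ℤ) * ((1 + X : Polynomial ℤ) ^ g * X ^ k).coeff n =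
        ((1 + X) ^ (g - i) * R).coeff n := by
  refine ⟨∑ j ∈ range (i + 1), C ((g.choose j * k.choose (i - j) : ℕ) : ℤ) *
      ((1 + X) ^ (i - j) * X ^ (k - (i - j) + i)), ?_, ?_⟩
  · intro n
    rw [finset_sum_coeff]
    refine Finset.sum_nonneg fun j _ => ?_
    rw [coeff_C_mul, coeff_mul_X_pow']
    split_ifs with hc
    · rw [coeff_one_add_X_pow]
      positivity
    · simp
  · intro n
    rw [Finset.mul_sum, finset_sum_coeff]
    have hcoef : ∀ j ∈ range (i + 1),
        ((1 + X : Polynomial ℤ) ^ (g - i) * (C ((g.choose j * k.choose (i - j) : ℕ) : ℤ) *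
          ((1 + X) ^ (i - j) * X ^ (k - (i - j) + i)))).coeff n =
        ((g.choose j * k.choose (i - j) *
          (if k ≤ n ∧ j ≤ n - k then (g - j).choose (n - k - j) else 0) : ℕ) : ℤ) := by
      intro j hj
      have hji : j ≤ i := by simpa using Nat.lt_succ_iff.mp (Finset.mem_range.mp hj)
      have hre : (1 + X : Polynomial ℤ) ^ (g - i) *
          (C ((g.choose j * k.choose (i - j) : ℕ) : ℤ) *
            ((1 + X) ^ (i - j) * X ^ (k - (i - j) + i))) =
          C ((g.choose j * k.choose (i - j) : ℕ) : ℤ) *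
            ((1 + X) ^ (g - j) * X ^ (k - (i - j) + i)) := by
        rw [show g - j = (g - i) + (i - j) by omega, pow_add]; ring
      rw [hre, coeff_C_mul, coeff_mul_X_pow']
      rcases le_or_gt (i - j) k with hik | hik
      · have he : k - (i - j) + i = k + j := by omega
        rw [he]
        split_ifs with h1 h2 h2
        · rw [coeff_one_add_X_pow, show n - (k + j) = n - k - j by omega]
          push_cast; ring
        · omega
        · omega
        · push_cast; ring
      · rw [Nat.choose_eq_zero_of_lt hik]
        split_ifs <;> simp
    rw [Finset.sum_congr rfl hcoef, ← Nat.cast_sum]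
    rw [coeff_mul_X_pow', coeff_one_add_X_pow]
    rcases le_or_gt k n with hkn | hkn
    · rw [if_pos hkn]
      have := nat_id g i k (n - k)
      have hsum : ∑ j ∈ range (i + 1), g.choose j * k.choose (i - j) *
          (if k ≤ n ∧ j ≤ n - k then (g - j).choose (n - k - j) else 0) =
          g.choose (n - k) * n.choose i := by
        rw [show n.choose i = ((n - k) + k).choose i by rw [Nat.sub_add_cancel hkn], ← this]
        exact Finset.sum_congr rfl fun j _ => by
          congr 1
          split_ifs with h1 h2 h2 <;> first | rfl | omega
      rw [hsum]; push_cast; ring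
    · rw [if_neg (by omega)]
      have hsum : ∑ j ∈ range (i + 1), g.choose j * k.choose (i - j) *
          (if k ≤ n ∧ j ≤ n - k then (g - j).choose (n - k - j) else 0) = 0 := by
        refine Finset.sum_eq_zero fun j _ => ?_
        rw [if_neg (by omega)]; ring
      rw [hsum]; push_cast; ring

lemma onestep (g i : ℕ) (hig : i ≤ g) (Q : Polynomial ℤ) (hQ : ∀ k : ℕ, 0 ≤ Q.coeff k) :
    ∃ R : Polynomial ℤ, (∀ n : ℕ, 0 ≤ R.coeff n) ∧
      ∀ n : ℕ, (n.choose i : ℤ) * ((1 + X : Polynomial ℤ) ^ g * Q).coeff n =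
        ((1 + X) ^ (g - i) * R).coeff n := by
  choose Rf hRf1 hRf2 using fun k => core g i k hig
  refine ⟨∑ k ∈ Q.support, C (Q.coeff k) * Rf k, ?_, ?_⟩
  · intro n
    rw [finset_sum_coeff]
    exact Finset.sum_nonneg fun k _ => by
      rw [coeff_C_mul]; exact mul_nonneg (hQ k) (hRf1 k n)
  · intro n
    conv_lhs => rw [Q.as_sum_support_C_mul_X_pow]
    rw [Finset.mul_sum, finset_sum_coeff, Finset.mul_sum, Finset.mul_sum, finset_sum_coeff]
    refine Finset.sum_congr rfl fun k _ => ?_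
    have h1 : (1 + X : Polynomial ℤ) ^ g * (C (Q.coeff k) * X ^ k) =
        C (Q.coeff k) * ((1 + X) ^ g * X ^ k) := by ring
    have h2 : (1 + X : Polynomial ℤ) ^ (g - i) * (C (Q.coeff k) * Rf k) =
        C (Q.coeff k) * ((1 + X) ^ (g - i) * Rf k) := by ring
    rw [h1, h2, coeff_C_mul, coeff_C_mul, ← hRf2 k n]
    ring

lemma nn_mul (P R : Polynomial ℤ) (hP : ∀ n : ℕ, 0 ≤ P.coeff n)
    (hR : ∀ n : ℕ, 0 ≤ R.coeff n) : ∀ n : ℕ, 0 ≤ (P * R).coeff n := by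
  intro n
  rw [coeff_mul]
  exact Finset.sum_nonneg fun x _ => mul_nonneg (hP _) (hR _)

lemma main_general (g h : ℕ) (hhg : h ≤ g) (I : Finset ℤ) (e : ℤ → ℕ) (q : ℤ → ℤ)
    (Q : Polynomial ℤ) (hQ : ∀ k : ℕ, 0 ≤ Q.coeff k)
    (hdiv : ∑ m ∈ I, C (q m) * X ^ e m = (1 + X) ^ g * Q) (d : ℕ → ℕ) :
    ∃ Q' : Polynomial ℤ, (∀ k : ℕ, 0 ≤ Q'.coeff k) ∧
      ∑ m ∈ I, C ((∑ i ∈ Finset.range (h + 1),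
          (d i : ℤ) * ((e m).choose i : ℤ)) * q m) * X ^ e m = (1 + X) ^ (g - h) * Q' := by
  classical
  choose Rf hRf1 hRf2 using fun i : ℕ => onestep g (min i g) (min_le_right i g) Q hQ
  have hGcoeff : ∀ (i : ℕ) (n : ℕ),
      (∑ m ∈ I, C (((e m).choose i : ℤ) * q m) * X ^ e m).coeff n =
      (n.choose i : ℤ) * (∑ m ∈ I, C (q m) * X ^ e m).coeff n := by
    intro i n
    rw [finset_sum_coeff, finset_sum_coeff, Finset.mul_sum]
    refine Finset.sum_congr rfl fun m _ => ?_
    rw [coeff_C_mul, coeff_C_mul, coeff_X_pow]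
    split_ifs with hne
    · rw [hne]; ring
    · ring
  have hG : ∀ i ≤ h, (∑ m ∈ I, C (((e m).choose i : ℤ) * q m) * X ^ e m) =
      (1 + X) ^ (g - i) * Rf i := by
    intro i hih
    have hig : i ≤ g := le_trans hih hhg
    have hmin : min i g = i := min_eq_left hig
    ext n
    rw [hGcoeff i n, hdiv]
    have h2 := hRf2 i n
    rw [hmin] at h2
    exact h2
  refine ⟨∑ i ∈ Finset.range (h + 1), C (d i : ℤ) * ((1 + X) ^ (h - i) * Rf i), ?_, ?_⟩
  · intro n
    rw [finset_sum_coeff]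
    refine Finset.sum_nonneg fun i _ => ?_
    rw [coeff_C_mul]
    refine mul_nonneg (by positivity) ?_
    exact nn_mul _ _ (fun n => by rw [coeff_one_add_X_pow]; positivity) (hRf1 i) n
  · have hLHS : ∑ m ∈ I, C ((∑ i ∈ Finset.range (h + 1),
        (d i : ℤ) * ((e m).choose i : ℤ)) * q m) * X ^ e m =
        ∑ i ∈ Finset.range (h + 1), C (d i : ℤ) *
          ∑ m ∈ I, C (((e m).choose i : ℤ) * q m) * X ^ e m := by
      calc ∑ m ∈ I, C ((∑ i ∈ Finset.range (h + 1),
              (d i : ℤ) * ((e m).choose i : ℤ)) * q m) * X ^ e m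
          = ∑ m ∈ I, ∑ i ∈ Finset.range (h + 1),
              C (d i : ℤ) * (C (((e m).choose i : ℤ) * q m) * X ^ e m) := by
            refine Finset.sum_congr rfl fun m _ => ?_
            rw [Finset.sum_mul, map_sum, Finset.sum_mul]
            refine Finset.sum_congr rfl fun i _ => ?_
            rw [mul_assoc ((d i : ℤ)), C_mul, mul_assoc]
        _ = ∑ i ∈ Finset.range (h + 1), ∑ m ∈ I,
              C (d i : ℤ) * (C (((e m).choose i : ℤ) * q m) * X ^ e m) := Finset.sum_comm
        _ = ∑ i ∈ Finset.range (h + 1), C (d i : ℤ) *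
              ∑ m ∈ I, C (((e m).choose i : ℤ) * q m) * X ^ e m := by
            refine Finset.sum_congr rfl fun i _ => ?_
            rw [Finset.mul_sum]
    rw [hLHS, Finset.mul_sum]
    refine Finset.sum_congr rfl fun i hi => ?_
    have hih : i ≤ h := Nat.lt_succ_iff.mp (Finset.mem_range.mp hi)
    rw [hG i hih, show g - i = (g - h) + (h - i) by omega, pow_add]
    ring

/-- **Lemma 4.5 (Lee–Schiffler).** If `∑_{m ∈ I} q(m) x^{b-m}` is divisible by `(1+x)^g`
with a quotient having nonnegative coefficients, and `p(m) = ∑_{i=0}^{h} d_i * binom(b-m, i)`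
with all `d_i ≥ 0` and `h ≤ g`, then `∑_{m ∈ I} p(m) q(m) x^{b-m}` is divisible by
`(1+x)^{g-h}` with a quotient having nonnegative coefficients. -/
theorem divisibility_transfer (g h b : ℕ) (hhg : h ≤ g)
    (I : Finset ℤ) (hI : ∀ m ∈ I, m ≤ (b : ℤ)) (q : ℤ → ℤ)
    (Q : Polynomial ℤ) (hQ : ∀ k : ℕ, 0 ≤ Q.coeff k)
    (hdiv : ∑ m ∈ I, C (q m) * X ^ ((b : ℤ) - m).toNat = (1 + X) ^ g * Q)
    (d : ℕ → ℕ) (p : ℤ → ℤ)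
    (hp : ∀ m : ℤ, p m = ∑ i ∈ Finset.range (h + 1),
      (d i : ℤ) * (((b : ℤ) - m).toNat.choose i : ℤ)) :
    ∃ Q' : Polynomial ℤ, (∀ k : ℕ, 0 ≤ Q'.coeff k) ∧
      ∑ m ∈ I, C (p m * q m) * X ^ ((b : ℤ) - m).toNat = (1 + X) ^ (g - h) * Q' := by
  obtain ⟨Q', hQ'1, hQ'2⟩ :=
    main_general g h hhg I (fun m => ((b : ℤ) - m).toNat) q Q hQ hdiv d
  refine ⟨Q', hQ'1, ?_⟩
  rw [← hQ'2]
  exact Finset.sum_congr rfl fun m _ => by rw [hp m]
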